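/- (Uniform bound (4.27) for the second moment of the downcrossing time.) For every b > 0, with f(x) := 1/(3x³) − b/(2x²), one has limsup_{ε→0⁺} (1/ε³)·∫_{1/b}^∞ ∫_{y}^{∞} ∫_{1/b}^{y} (y·ỹ)^{−4}·exp( (1/ε²)·( −b³/6 − f(y) + f(w̃) − f(ỹ) ) ) dw̃ dỹ dy < ∞. -/

import Mathlib

open MeasureTheory Real Set Filter
open scoped Topology

section helpers

lemma rpow_neg4' {t : ℝ} (ht0 : 0 < t) : t ^ (-4:ℝ) = 1/t^4 := by
  rw [show ((-4:ℝ)) = -(4:ℕ) by norm_num]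
  rw [Real.rpow_neg ht0.le, Real.rpow_natCast, one_div]

lemma rpow_neg6' {t : ℝ} (ht0 : 0 < t) : t ^ (-6:ℝ) = 1/t^6 := by
  rw [show ((-6:ℝ)) = -(6:ℕ) by norm_num]
  rw [Real.rpow_neg ht0.le, Real.rpow_natCast, one_div]

lemma intOn_pow4 {z : ℝ} (hz : 0 < z) : IntegrableOn (fun t : ℝ => 1/t^4) (Ioi z) := by
  refine ((integrableOn_Ioi_rpow_of_lt (by norm_num : (-4:ℝ) < -1) hz).congr_fun ?_
    measurableSet_Ioi)
  exact fun t ht => rpow_neg4' (hz.trans ht)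

lemma intOn_pow6 {z : ℝ} (hz : 0 < z) : IntegrableOn (fun t : ℝ => 1/t^6) (Ioi z) := by
  refine ((integrableOn_Ioi_rpow_of_lt (by norm_num : (-6:ℝ) < -1) hz).congr_fun ?_
    measurableSet_Ioi)
  exact fun t ht => rpow_neg6' (hz.trans ht)

lemma intval_pow4 {z : ℝ} (hz : 0 < z) : ∫ t in Ioi z, 1/t^4 = 1/(3*z^3) := by
  have h := integral_Ioi_rpow_of_lt (by norm_num : (-4:ℝ) < -1) hz
  rw [show ∫ t in Ioi z, 1/t^4 = ∫ t in Ioi z, t ^ (-4:ℝ) from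
    setIntegral_congr_fun measurableSet_Ioi (fun t ht => (rpow_neg4' (hz.trans ht)).symm), h,
    show ((-4:ℝ)+1) = -(3:ℕ) by norm_num, Real.rpow_neg hz.le, Real.rpow_natCast]
  have : z^3 ≠ 0 := by positivity
  field_simp
  ring

lemma intval_pow6 {z : ℝ} (hz : 0 < z) : ∫ t in Ioi z, 1/t^6 = 1/(5*z^5) := by
  have h := integral_Ioi_rpow_of_lt (by norm_num : (-6:ℝ) < -1) hz
  rw [show ∫ t in Ioi z, 1/t^6 = ∫ t in Ioi z, t ^ (-6:ℝ) from
    setIntegral_congr_fun measurableSet_Ioi (fun t ht => (rpow_neg6' (hz.trans ht)).symm), h,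
    show ((-6:ℝ)+1) = -(5:ℕ) by norm_num, Real.rpow_neg hz.le, Real.rpow_natCast]
  have : z^5 ≠ 0 := by positivity
  field_simp
  ring

lemma intOn_expIoi {a : ℝ} (d z : ℝ) (ha : 0 < a) :
    IntegrableOn (fun t : ℝ => exp (a*(d - t))) (Ioi z) := by
  have h0 : IntegrableOn (fun x : ℝ => exp (a*d) * exp (-a*x)) (Ioi z) :=
    (exp_neg_integrableOn_Ioi z ha).const_mul (exp (a*d))
  refine h0.congr_fun (fun t _ => ?_) measurableSet_Ioi
  simp only [← Real.exp_add]
  ring_nf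

lemma intval_expIoi {a d : ℝ} (ha : 0 < a) :
    ∫ t in Ioi d, exp (a*(d - t)) = 1/a := by
  have hderiv : ∀ x ∈ Ici d, HasDerivAt (fun t => -(exp (a*(d - t))/a)) (exp (a*(d - x))) x := by
    intro x _
    have h1 : HasDerivAt (fun t : ℝ => a*(d - t)) (a * (-1)) x :=
      ((hasDerivAt_id x).const_sub d).const_mul a
    have h2 := (h1.exp.div_const a).neg
    refine h2.congr_deriv ?_
    field_simp
  have htend : Tendsto (fun t => -(exp (a*(d - t))/a)) atTop (𝓝 0) := by
    have h3 : Tendsto (fun t : ℝ => a*(d - t)) atTop atBot := by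
      apply Tendsto.const_mul_atBot ha
      have := tendsto_atBot_add_const_left atTop d tendsto_neg_atTop_atBot (α := ℝ)
      exact this.congr (fun t => (sub_eq_add_neg d t).symm)
    have := (Real.tendsto_exp_atBot.comp h3).div_const a |>.neg
    simpa using this
  have h := integral_Ioi_of_hasDerivAt_of_tendsto' hderiv (intOn_expIoi d d ha) htend
  rw [h]
  simp

lemma expItv_integrable (k c y d : ℝ) :
    IntervalIntegrable (fun tw => exp (k*(tw - d))) volume c y := by
  apply Continuous.intervalIntegrable
  exact (continuous_const.mul (continuous_id.sub continuous_const)).rexp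

lemma intval_expItv {k c y : ℝ} (hk : 0 < k) (hcy : c ≤ y) :
    ∫ tw in c..y, exp (k*(tw - y)) ≤ 1/k := by
  have hderiv : ∀ x ∈ uIcc c y, HasDerivAt (fun t => exp (k*(t - y))/k) (exp (k*(x - y))) x := by
    intro x _
    have h1 : HasDerivAt (fun t : ℝ => k*(t - y)) (k * 1) x :=
      ((hasDerivAt_id x).sub_const y).const_mul k
    have h2 := h1.exp.div_const k
    refine h2.congr_deriv ?_
    field_simp
  have hint : IntervalIntegrable (fun x => exp (k*(x - y))) volume c y :=
    expItv_integrable k c y y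
  rw [intervalIntegral.integral_eq_sub_of_hasDerivAt hderiv hint]
  have h1 : exp (k*(y-y)) = 1 := by simp
  have h2 : 0 < exp (k*(c-y)) := exp_pos _
  rw [h1]
  have h3 : 0 ≤ exp (k*(c-y)) / k := div_nonneg h2.le hk.le
  linarith

lemma intval_expItv_le_len {k c y : ℝ} (hk : 0 ≤ k) (hcy : c ≤ y) :
    ∫ tw in c..y, exp (k*(tw - y)) ≤ y - c := by
  calc ∫ tw in c..y, exp (k*(tw - y)) ≤ ∫ _tw in c..y, (1:ℝ) := by
        apply intervalIntegral.integral_mono_on hcy (expItv_integrable k c y y)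
          (intervalIntegrable_const)
        intro x hx
        rw [← Real.exp_zero]
        exact exp_le_exp.2 (by nlinarith [hx.2])
    _ = y - c := by simp

lemma quadlin {A a x : ℝ} (hA : 0 < A) (ha : a^2 ≤ 4*A) :
    exp (-(A*x^2)) ≤ exp 1 * exp (a*(0 - x)) := by
  rw [← Real.exp_add]
  apply exp_le_exp.2
  nlinarith [sq_nonneg (2*A*x - a)]

lemma expsmall {K ε : ℝ} (hK : 0 < K) (hε : 0 < ε) (hεK : ε ≤ K^2/4) :
    exp (-(K/ε^2)) ≤ ε^3 := by
  have hε2 : (0:ℝ) < ε^2 := by positivity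
  have h2 : 1 + K/(2*ε^2) ≤ exp (K/(2*ε^2)) := by
    linarith [add_one_le_exp (K/(2*ε^2))]
  have h1 : exp (K/ε^2) = exp (K/(2*ε^2))^2 := by
    rw [← Real.exp_nat_mul]
    norm_num
    ring_nf
  have hq : 0 ≤ K/(2*ε^2) := by positivity
  have h3 : (K/(2*ε^2))^2 ≤ exp (K/ε^2) := by
    rw [h1]
    nlinarith
  have h4 : 1/ε^3 ≤ (K/(2*ε^2))^2 := by
    have h4a : 1/ε^3 ≤ K^2/(4*ε^4) := by
      rw [div_le_div_iff₀ (by positivity) (by positivity)]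
      have hK2 : 4*ε ≤ K^2 := by linarith [hεK]
      nlinarith [pow_pos hε 3, pow_pos hε 4,
        mul_le_mul_of_nonneg_right hK2 (pow_pos hε 3).le]
    have h4b : K^2/(4*ε^4) = (K/(2*ε^2))^2 := by ring
    linarith [h4a, h4b.symm.le, h4b.le]
  have h5 : 1/ε^3 ≤ exp (K/ε^2) := le_trans h4 h3
  rw [exp_neg]
  rw [inv_le_comm₀ (exp_pos _) (by positivity)]
  rw [← one_div]
  exact h5

lemma fkey {b c : ℝ} (hb : 0 < b) (hc1 : b*c = 1) {f : ℝ → ℝ}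
    (hf : ∀ x : ℝ, f x = 1 / (3 * x ^ 3) - b / (2 * x ^ 2))
    {u v : ℝ} (hu : c ≤ u) (huv : u ≤ v) :
    b*(v-u)*(u+v-2*c)/(6*u^2*v^2) ≤ f v - f u := by
  have hc0 : 0 < c := by nlinarith
  have hu0 : 0 < u := lt_of_lt_of_le hc0 hu
  have hv0 : 0 < v := lt_of_lt_of_le hu0 huv
  have hbu : 1 ≤ b*u := by nlinarith
  have hbv : 1 ≤ b*v := by nlinarith
  have hc : c = 1/b := by field_simp; linarith [hc1]
  have hid : f v - f u - b*(v-u)*(u+v-2*c)/(6*u^2*v^2)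
      = (v-u)*(2*(u^2*(b*v-1) + v^2*(b*u-1)))/(6*u^3*v^3) := by
    rw [hf, hf, hc]
    field_simp
    ring
  have hnn : 0 ≤ (v-u)*(2*(u^2*(b*v-1) + v^2*(b*u-1)))/(6*u^3*v^3) := by
    apply div_nonneg _ (by positivity)
    have h1 : 0 ≤ u^2*(b*v-1) := mul_nonneg (sq_nonneg u) (by linarith)
    have h2 : 0 ≤ v^2*(b*u-1) := mul_nonneg (sq_nonneg v) (by linarith)
    have h3 : 0 ≤ v - u := by linarith
    nlinarith
  linarith

lemma fmono {b c : ℝ} (hb : 0 < b) (hc1 : b*c = 1) {f : ℝ → ℝ}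
    (hf : ∀ x : ℝ, f x = 1 / (3 * x ^ 3) - b / (2 * x ^ 2))
    {u v : ℝ} (hu : c ≤ u) (huv : u ≤ v) : f u ≤ f v := by
  have h := fkey hb hc1 hf hu huv
  have hc0 : 0 < c := by nlinarith
  have hu0 : 0 < u := lt_of_lt_of_le hc0 hu
  have hv0 : 0 < v := lt_of_lt_of_le hu0 huv
  have h0 : 0 ≤ b*(v-u)*(u+v-2*c)/(6*u^2*v^2) := by
    apply div_nonneg _ (by positivity)
    apply mul_nonneg (mul_nonneg hb.le (by linarith))
    linarith
  linarith

lemma fkeyA {b c : ℝ} (hb : 0 < b) (hc1 : b*c = 1) {f : ℝ → ℝ}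
    (hf : ∀ x : ℝ, f x = 1 / (3 * x ^ 3) - b / (2 * x ^ 2))
    {u v : ℝ} (hu : c ≤ u) (huv : u ≤ v) (hv2 : v ≤ 2*c) :
    b^5/96*((v-u)*(v-c)) ≤ f v - f u := by
  have h := fkey hb hc1 hf hu huv
  have hc0 : 0 < c := by nlinarith
  have hu0 : 0 < u := lt_of_lt_of_le hc0 hu
  have hv0 : 0 < v := lt_of_lt_of_le hu0 huv
  refine le_trans ?_ h
  rw [le_div_iff₀ (by positivity)]
  have e2 : 0 ≤ v - u := by linarith
  have e3 : 0 ≤ v - c := by linarith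
  have e1 : 6*(u^2*v^2) ≤ 96*c^4 := by
    have h1 : u^2 ≤ 4*c^2 := by nlinarith
    have h2 : v^2 ≤ 4*c^2 := by nlinarith
    nlinarith [sq_nonneg u, sq_nonneg c]
  have hbc4 : b^5*c^4 = b := by
    calc b^5*c^4 = b*(b*c)^4 := by ring
      _ = b := by rw [hc1]; ring
  calc b^5/96*((v-u)*(v-c)) * (6*u^2*v^2)
      ≤ b^5/96*((v-u)*(v-c)) * (96*c^4) := by
        apply mul_le_mul_of_nonneg_left _ (by positivity)
        · calc 6*u^2*v^2 = 6*(u^2*v^2) := by ring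
            _ ≤ 96*c^4 := e1
    _ = b*((v-u)*(v-c)) := by linear_combination ((v-u)*(v-c))*hbc4
    _ ≤ b*((v-u)*(u+v-2*c)) := by
        apply mul_le_mul_of_nonneg_left _ hb.le
        apply mul_le_mul_of_nonneg_left (by linarith) e2
    _ = b*(v-u)*(u+v-2*c) := by ring

lemma fkeyB {b c : ℝ} (hb : 0 < b) (hc1 : b*c = 1) {f : ℝ → ℝ}
    (hf : ∀ x : ℝ, f x = 1 / (3 * x ^ 3) - b / (2 * x ^ 2))
    {v : ℝ} (hv : c ≤ v) :
    b^5/96*(min (v-c) c)^2 ≤ f v - f c := by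
  have hc0 : 0 < c := by nlinarith
  rcases le_or_gt v (2*c) with h2 | h2
  · have hmin : min (v-c) c = v - c := min_eq_left (by linarith)
    rw [hmin]
    have := fkeyA hb hc1 hf (le_refl c) hv h2
    calc b^5/96*(v-c)^2 = b^5/96*((v-c)*(v-c)) := by ring
      _ ≤ f v - f c := this
  · have hmin : min (v-c) c = c := min_eq_right (by linarith)
    rw [hmin]
    have h3 := fkeyA hb hc1 hf (le_refl c) (by linarith : c ≤ 2*c) (le_refl (2*c))
    have h4 := fmono hb hc1 hf (by linarith : c ≤ 2*c) h2.le
    have h5 : b^5/96*((2*c-c)*(2*c-c)) = b^5/96*c^2 := by ring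
    calc b^5/96*c^2 = b^5/96*((2*c-c)*(2*c-c)) := by ring
      _ ≤ f (2*c) - f c := h3
      _ ≤ f v - f c := by linarith

end helpers

set_option maxHeartbeats 1000000 in
/-- (Uniform bound (4.27) for the second moment of the downcrossing time.) -/
theorem statement18 (b : ℝ) (hb : 0 < b)
    (f : ℝ → ℝ) (hf : ∀ x : ℝ, f x = 1 / (3 * x ^ 3) - b / (2 * x ^ 2)) :
    ∃ C : ℝ, ∀ᶠ ε in 𝓝[>] (0 : ℝ),
      1 / ε ^ 3 *
          ∫ y in Ioi (1 / b), ∫ ty in Ioi y, ∫ tw in (1 / b)..y,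
            1 / (y * ty) ^ 4 *
              Real.exp (1 / ε ^ 2 * (-b ^ 3 / 6 - f y + f tw - f ty)) ≤ C := by
  have hfx : f = fun x : ℝ => 1 / (3 * x ^ 3) - b / (2 * x ^ 2) := funext hf
  set c : ℝ := 1 / b with hcdef
  have hc0 : 0 < c := by positivity
  have hc1 : b * c = 1 := by rw [hcdef]; field_simp
  have hfc : f c = -b^3/6 := by
    rw [hf, hcdef]
    field_simp
    ring
  clear_value c
  set β : ℝ := b^5/96 with hβdef
  have hβ0 : 0 < β := by positivity
  set sβ : ℝ := Real.sqrt β with hsβdef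
  set s2β : ℝ := Real.sqrt (2*β) with hs2βdef
  have hsβ0 : 0 < sβ := Real.sqrt_pos.2 hβ0
  have hs2β0 : 0 < s2β := Real.sqrt_pos.2 (by linarith)
  clear_value β
  have hsβsq : sβ^2 = β := Real.sq_sqrt hβ0.le
  have hs2βsq : s2β^2 = 2*β := Real.sq_sqrt (by linarith)
  clear_value sβ s2β
  set KB : ℝ := exp 1/(c^4*s2β) + 1/(3*c^3) with hKBdef
  have hKB0 : 0 < KB := by
    rw [hKBdef]
    have h1 : 0 < exp 1/(c^4*s2β) := div_pos (exp_pos 1) (by positivity)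
    have h2 : (0:ℝ) < 1/(3*c^3) := by positivity
    linarith
  set C : ℝ := exp 1*KB/(sβ*s2β*c^4) + 1/(15*c^5) with hCdef
  clear_value KB C
  refine ⟨C, ?_⟩
  have hmem : Ioc (0:ℝ) (min 1 ((β*c^2/2)^2/4)) ∈ 𝓝[>] (0:ℝ) :=
    Ioc_mem_nhdsGT_of_mem ⟨le_refl 0, lt_min one_pos (div_pos (pow_pos (half_pos (mul_pos hβ0 (pow_pos hc0 2))) 2) (by norm_num))⟩
  filter_upwards [hmem] with ε hεmem
  obtain ⟨hε0, hεle⟩ := hεmem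
  have hε1 : ε ≤ 1 := le_trans hεle (min_le_left _ _)
  have hεK : ε ≤ (β*c^2/2)^2/4 := le_trans hεle (min_le_right _ _)
  have hε2 : (0:ℝ) < ε^2 := by positivity
  -- main abbreviations
  set A : ℝ := β/(2*ε^2) with hAdef
  have hA0 : 0 < A := by rw [hAdef]; exact div_pos hβ0 (by positivity)
  have hβA : 2*A*ε^2 = β := by
    rw [hAdef]; field_simp
  clear_value A
  set a : ℝ := s2β/ε with hadef
  have ha0 : 0 < a := by rw [hadef]; exact div_pos hs2β0 hε0
  clear_value a
  have hasq : a^2 ≤ 4*A := by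
    have h1 : a^2 = 2*β/ε^2 := by rw [hadef, div_pow, hs2βsq]
    have h2 : 4*A = 2*β/ε^2 := by rw [hAdef]; field_simp; ring
    linarith
  -- small exponential bounds
  have hEh3 : exp (-(A*c^2)) ≤ ε^3 := by
    rw [show A*c^2 = (β*c^2/2)/ε^2 by rw [hAdef]; ring]
    exact expsmall (half_pos (mul_pos hβ0 (pow_pos hc0 2))) hε0 hεK
  have hEh : exp (-(A*c^2)) ≤ ε := le_trans hEh3 (by nlinarith [hε0, hε1])
  have hE3 : exp (-(2*A*c^2)) ≤ ε^3 := by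
    rw [show 2*A*c^2 = (β*c^2)/ε^2 by rw [hAdef]; field_simp]
    apply expsmall (mul_pos hβ0 (pow_pos hc0 2)) hε0
    have h1 : (β*c^2/2)^2/4 ≤ (β*c^2)^2/4 := by nlinarith [hβ0, hc0, sq_nonneg (β*c^2)]
    linarith
  -- region-1 exponent bound
  have hexp1 : ∀ y ty tw : ℝ, c < y → y ≤ 2*c → y ≤ ty → c ≤ tw → tw ≤ y →
      1/ε^2 * (-b^3/6 - f y + f tw - f ty)
        ≤ -(A*(y-c)^2) + (-(A*(min (ty-c) c)^2) + (2*A*(y-c))*(tw - y)) := by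
    intro y ty tw hy1 hy2 hty htw1 htw2
    have k1 : β*((y-tw)*(y-c)) ≤ f y - f tw := by
      rw [hβdef]; exact fkeyA hb hc1 hf htw1 htw2 hy2
    have k2 : β*(min (ty-c) c)^2 ≤ f ty - f c := by
      rw [hβdef]; exact fkeyB hb hc1 hf (by linarith : c ≤ ty)
    have hm : y - c ≤ min (ty-c) c := le_min (by linarith) (by linarith)
    have hm0 : (0:ℝ) ≤ y - c := by linarith
    have hmsq : (y-c)^2 ≤ (min (ty-c) c)^2 := pow_le_pow_left₀ hm0 hm 2
    rw [one_div, inv_mul_eq_div, div_le_iff₀ hε2]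
    rw [← hβA] at k1 k2
    have h6 : A*ε^2*(y-c)^2 ≤ A*ε^2*(min (ty-c) c)^2 :=
      mul_le_mul_of_nonneg_left hmsq (mul_nonneg hA0.le hε2.le)
    have hfc' : -b^3/6 = f c := hfc.symm
    rw [hfc']
    linarith [k1, k2, h6]
  -- region-2 exponent bound
  have hexp2 : ∀ y ty tw : ℝ, 2*c < y → y ≤ ty → c ≤ tw → tw ≤ y →
      1/ε^2 * (-b^3/6 - f y + f tw - f ty) ≤ -(2*A*c^2) := by
    intro y ty tw hy1 hty htw1 htw2
    have k1 : f tw ≤ f y := fmono hb hc1 hf htw1 htw2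
    have hminr : min (ty-c) c = c := min_eq_right (by linarith)
    have k2 : β*c^2 ≤ f ty - f c := by
      have h := fkeyB hb hc1 hf (by linarith : c ≤ ty)
      rw [hminr] at h
      rw [hβdef]; exact h
    rw [one_div, inv_mul_eq_div, div_le_iff₀ hε2]
    rw [← hβA] at k2
    have hfc' : -b^3/6 = f c := hfc.symm
    rw [hfc']
    linarith [k1, k2]
  -- continuity of the inner integrand in tw
  have hcont : ∀ y ty : ℝ, c ≤ y → ContinuousOn
      (fun tw => 1/(y*ty)^4 * exp (1/ε^2 * (-b^3/6 - f y + f tw - f ty))) (uIcc c y) := by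
    intro y ty hcy
    rw [uIcc_of_le hcy]
    apply continuousOn_const.mul
    apply ContinuousOn.rexp
    apply continuousOn_const.mul
    have hfcont : ContinuousOn f (Icc c y) := by
      rw [hfx]
      apply ContinuousOn.sub
      · apply ContinuousOn.div continuousOn_const (by fun_prop)
        intro x hx
        have hx0 : 0 < x := lt_of_lt_of_le hc0 hx.1
        positivity
      · apply ContinuousOn.div continuousOn_const (by fun_prop)
        intro x hx
        have hx0 : 0 < x := lt_of_lt_of_le hc0 hx.1
        positivity
    exact (continuousOn_const.add hfcont).sub continuousOn_const
  -- the inner tw-bracket bound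
  have hbracket : ∀ y : ℝ, c < y →
      ∫ tw in c..y, exp ((2*A*(y-c))*(tw - y)) ≤ ε/sβ := by
    intro y hy
    have hk0 : 0 < 2*A*(y-c) := by
      have hyc : 0 < y - c := by linarith
      exact mul_pos (mul_pos two_pos hA0) hyc
    rcases le_or_gt (y - c) (ε/sβ) with hcase | hcase
    · calc ∫ tw in c..y, exp ((2*A*(y-c))*(tw - y)) ≤ y - c :=
            intval_expItv_le_len hk0.le hy.le
        _ ≤ ε/sβ := hcase
    · calc ∫ tw in c..y, exp ((2*A*(y-c))*(tw - y)) ≤ 1/(2*A*(y-c)) :=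
            intval_expItv hk0 hy.le
        _ ≤ ε/sβ := by
            rw [div_le_div_iff₀ hk0 hsβ0]
            have h10 : 2*A*ε*(ε/sβ) ≤ 2*A*ε*(y-c) :=
              mul_le_mul_of_nonneg_left hcase.le
                (mul_nonneg (mul_nonneg two_pos.le hA0.le) hε0.le)
            have h11 : 2*A*ε*(ε/sβ) = sβ := by
              field_simp
              linear_combination hβA - hsβsq
            nlinarith [h10, h11]
  -- pointwise dominator for the ty-integral
  have hD0 : ∀ ty : ℝ, c < ty →
      1/ty^4 * exp (-(A*(min (ty-c) c)^2))
        ≤ exp 1/c^4 * exp (a*(c - ty)) + exp (-(A*c^2)) * (1/ty^4) := by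
    intro ty hty
    have hty0 : 0 < ty := hc0.trans hty
    rcases le_or_gt ty (2*c) with h2 | h2
    · have hmin : min (ty-c) c = ty - c := min_eq_left (by linarith)
      rw [hmin]
      have hquad : exp (-(A*(ty-c)^2)) ≤ exp 1 * exp (a*(0 - (ty-c))) := quadlin hA0 hasq
      rw [show a*(0 - (ty-c)) = a*(c - ty) by ring] at hquad
      have h3 : 1/ty^4 ≤ 1/c^4 :=
        one_div_le_one_div_of_le (pow_pos hc0 4) (pow_le_pow_left₀ hc0.le (by linarith) 4)
      have h6 : 1/ty^4 * exp (-(A*(ty-c)^2)) ≤ 1/c^4 * (exp 1 * exp (a*(c - ty))) :=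
        mul_le_mul h3 hquad (exp_pos _).le (by positivity)
      have h7 : 0 ≤ exp (-(A*c^2)) * (1/ty^4) := by positivity
      have h8 : 1/c^4 * (exp 1 * exp (a*(c - ty))) = exp 1/c^4 * exp (a*(c - ty)) := by ring
      linarith
    · have hmin : min (ty-c) c = c := min_eq_right (by linarith)
      rw [hmin]
      have h7 : 0 ≤ exp 1/c^4 * exp (a*(c - ty)) := by positivity
      have h8 : 1/ty^4 * exp (-(A*c^2)) = exp (-(A*c^2)) * (1/ty^4) := by ring
      linarith
  -- integrability of the dominator
  have hintD0 : ∀ z : ℝ, 0 < z → IntegrableOn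
      (fun ty => exp 1/c^4 * exp (a*(c - ty)) + exp (-(A*c^2)) * (1/ty^4)) (Ioi z) := by
    intro z hz
    exact ((intOn_expIoi c z ha0).const_mul _).add ((intOn_pow4 hz).const_mul _)
  have hD0val : ∫ ty in Ioi c, (exp 1/c^4 * exp (a*(c - ty)) + exp (-(A*c^2)) * (1/ty^4))
      = exp 1/c^4 * (1/a) + exp (-(A*c^2)) * (1/(3*c^3)) := by
    rw [integral_add ((intOn_expIoi c c ha0).const_mul _) ((intOn_pow4 hc0).const_mul _),
      integral_const_mul, integral_const_mul, intval_expIoi ha0, intval_pow4 hc0]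
  -- inner (tw) step, region 1
  have step_inner : ∀ y ty : ℝ, c < y → y ≤ 2*c → y ≤ ty →
      (∫ tw in c..y, 1/(y*ty)^4 * exp (1/ε^2 * (-b^3/6 - f y + f tw - f ty)))
        ≤ ((ε/sβ) * exp (-(A*(y-c)^2)) * (1/y^4)) * (1/ty^4 * exp (-(A*(min (ty-c) c)^2))) := by
    intro y ty hy1 hy2 hty
    have hy0 : 0 < y := hc0.trans hy1
    have hty0 : 0 < ty := lt_of_lt_of_le hy0 hty
    have hCST0 : 0 ≤ exp (-(A*(y-c)^2)) * (1/y^4) * (1/ty^4 * exp (-(A*(min (ty-c) c)^2))) := by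
      positivity
    calc (∫ tw in c..y, 1/(y*ty)^4 * exp (1/ε^2 * (-b^3/6 - f y + f tw - f ty)))
        ≤ ∫ tw in c..y, (exp (-(A*(y-c)^2)) * (1/y^4) * (1/ty^4 * exp (-(A*(min (ty-c) c)^2))))
            * exp ((2*A*(y-c))*(tw - y)) := by
          apply intervalIntegral.integral_mono_on hy1.le
            ((hcont y ty hy1.le).intervalIntegrable)
            ((expItv_integrable (2*A*(y-c)) c y y).const_mul _)
          intro x hx
          have hE := hexp1 y ty x hy1 hy2 hty hx.1 hx.2
          calc 1/(y*ty)^4 * exp (1/ε^2 * (-b^3/6 - f y + f x - f ty))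
              ≤ 1/(y*ty)^4 * exp (-(A*(y-c)^2) + (-(A*(min (ty-c) c)^2)
                  + (2*A*(y-c))*(x - y))) :=
                mul_le_mul_of_nonneg_left (exp_le_exp.2 hE) (by positivity)
            _ = (exp (-(A*(y-c)^2)) * (1/y^4) * (1/ty^4 * exp (-(A*(min (ty-c) c)^2))))
                  * exp ((2*A*(y-c))*(x - y)) := by
                rw [Real.exp_add, Real.exp_add, mul_pow]
                ring
      _ = (exp (-(A*(y-c)^2)) * (1/y^4) * (1/ty^4 * exp (-(A*(min (ty-c) c)^2))))
            * ∫ tw in c..y, exp ((2*A*(y-c))*(tw - y)) := intervalIntegral.integral_const_mul _ _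
      _ ≤ (exp (-(A*(y-c)^2)) * (1/y^4) * (1/ty^4 * exp (-(A*(min (ty-c) c)^2)))) * (ε/sβ) :=
          mul_le_mul_of_nonneg_left (hbracket y hy1) hCST0
      _ = ((ε/sβ) * exp (-(A*(y-c)^2)) * (1/y^4)) * (1/ty^4 * exp (-(A*(min (ty-c) c)^2))) := by
          ring
  -- middle (ty) step, region 1
  have step_mid1 : ∀ y : ℝ, c < y → y ≤ 2*c →
      (∫ ty in Ioi y, ∫ tw in c..y, 1/(y*ty)^4 * exp (1/ε^2 * (-b^3/6 - f y + f tw - f ty)))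
        ≤ (ε/sβ) * exp (-(A*(y-c)^2)) * (1/y^4)
            * (exp 1/c^4 * (1/a) + exp (-(A*c^2)) * (1/(3*c^3))) := by
    intro y hy1 hy2
    have hy0 : 0 < y := hc0.trans hy1
    have hK0 : 0 ≤ (ε/sβ) * exp (-(A*(y-c)^2)) * (1/y^4) := by
      apply mul_nonneg (mul_nonneg (div_nonneg hε0.le hsβ0.le) (exp_pos _).le)
      positivity
    have hmono : (∫ ty in Ioi y, ∫ tw in c..y,
          1/(y*ty)^4 * exp (1/ε^2 * (-b^3/6 - f y + f tw - f ty)))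
        ≤ ∫ ty in Ioi y, ((ε/sβ) * exp (-(A*(y-c)^2)) * (1/y^4))
            * (exp 1/c^4 * exp (a*(c - ty)) + exp (-(A*c^2)) * (1/ty^4)) := by
      apply integral_mono_of_nonneg
      · refine (ae_restrict_iff' measurableSet_Ioi).2 (Filter.Eventually.of_forall ?_)
        intro ty hty
        apply intervalIntegral.integral_nonneg hy1.le
        intro u _
        positivity
      · exact ((hintD0 y hy0).const_mul _)
      · refine (ae_restrict_iff' measurableSet_Ioi).2 (Filter.Eventually.of_forall ?_)
        intro ty hty
        calc (∫ tw in c..y, 1/(y*ty)^4 * exp (1/ε^2 * (-b^3/6 - f y + f tw - f ty)))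
            ≤ ((ε/sβ) * exp (-(A*(y-c)^2)) * (1/y^4))
                * (1/ty^4 * exp (-(A*(min (ty-c) c)^2))) :=
              step_inner y ty hy1 hy2 (le_of_lt hty)
          _ ≤ ((ε/sβ) * exp (-(A*(y-c)^2)) * (1/y^4))
                * (exp 1/c^4 * exp (a*(c - ty)) + exp (-(A*c^2)) * (1/ty^4)) :=
              mul_le_mul_of_nonneg_left (hD0 ty (hy1.trans hty)) hK0
    rw [integral_const_mul] at hmono
    refine le_trans hmono (mul_le_mul_of_nonneg_left ?_ hK0)
    rw [← hD0val]
    apply setIntegral_mono_set (hintD0 c hc0)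
    · refine (ae_restrict_iff' measurableSet_Ioi).2 (Filter.Eventually.of_forall ?_)
      intro ty hty
      have hty0 : 0 < ty := hc0.trans hty
      positivity
    · exact (Ioi_subset_Ioi hy1.le).eventuallyLE
  -- middle (ty) step, region 2
  have step_mid2 : ∀ y : ℝ, 2*c < y →
      (∫ ty in Ioi y, ∫ tw in c..y, 1/(y*ty)^4 * exp (1/ε^2 * (-b^3/6 - f y + f tw - f ty)))
        ≤ exp (-(2*A*c^2)) * (1/3) * (1/y^6) := by
    intro y hy1
    have hcy : c < y := by linarith
    have hy0 : 0 < y := hc0.trans hcy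
    have hmono : (∫ ty in Ioi y, ∫ tw in c..y,
          1/(y*ty)^4 * exp (1/ε^2 * (-b^3/6 - f y + f tw - f ty)))
        ≤ ∫ ty in Ioi y, ((y-c) * (1/y^4) * exp (-(2*A*c^2))) * (1/ty^4) := by
      apply integral_mono_of_nonneg
      · refine (ae_restrict_iff' measurableSet_Ioi).2 (Filter.Eventually.of_forall ?_)
        intro ty hty
        apply intervalIntegral.integral_nonneg hcy.le
        intro u _
        positivity
      · exact ((intOn_pow4 hy0).const_mul _)
      · refine (ae_restrict_iff' measurableSet_Ioi).2 (Filter.Eventually.of_forall ?_)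
        intro ty hty
        have hty0 : 0 < ty := hy0.trans hty
        calc (∫ tw in c..y, 1/(y*ty)^4 * exp (1/ε^2 * (-b^3/6 - f y + f tw - f ty)))
            ≤ ∫ _tw in c..y, 1/(y*ty)^4 * exp (-(2*A*c^2)) := by
              apply intervalIntegral.integral_mono_on hcy.le
                ((hcont y ty hcy.le).intervalIntegrable) intervalIntegrable_const
              intro x hx
              exact mul_le_mul_of_nonneg_left
                (exp_le_exp.2 (hexp2 y ty x hy1 (le_of_lt hty) hx.1 hx.2)) (by positivity)
          _ = (y - c) * (1/(y*ty)^4 * exp (-(2*A*c^2))) := by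
              rw [intervalIntegral.integral_const, smul_eq_mul]
          _ = ((y-c) * (1/y^4) * exp (-(2*A*c^2))) * (1/ty^4) := by
              rw [mul_pow]; ring
    rw [integral_const_mul, intval_pow4 hy0] at hmono
    refine le_trans hmono ?_
    rw [show exp (-(2*A*c^2)) * (1/3) * (1/y^6)
        = (y * (1/y^4) * exp (-(2*A*c^2))) * (1/(3*y^3)) by field_simp]
    have hstep : (y-c) * (1/y^4) * exp (-(2*A*c^2)) ≤ y * (1/y^4) * exp (-(2*A*c^2)) := by
      apply mul_le_mul_of_nonneg_right _ (exp_pos _).le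
      apply mul_le_mul_of_nonneg_right (by linarith) (by positivity)
    exact mul_le_mul_of_nonneg_right hstep (by positivity)
  -- the y-dominator and its bound
  have houter : ∀ y ∈ Ioi c,
      (∫ ty in Ioi y, ∫ tw in c..y, 1/(y*ty)^4 * exp (1/ε^2 * (-b^3/6 - f y + f tw - f ty)))
        ≤ (ε/sβ) * (exp 1/c^4 * (1/a) + exp (-(A*c^2)) * (1/(3*c^3))) * exp 1
            * (1/y^4 * exp (a*(c - y)))
          + exp (-(2*A*c^2)) * (1/3) * (1/y^6) := by
    intro y hy
    have hy1 : c < y := hy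
    have hy0 : 0 < y := hc0.trans hy1
    have hBint0 : 0 ≤ exp 1/c^4 * (1/a) + exp (-(A*c^2)) * (1/(3*c^3)) := by
      have h1 : 0 ≤ exp 1/c^4 * (1/a) :=
        mul_nonneg (by positivity) (le_of_lt (one_div_pos.2 ha0))
      have h2 : 0 ≤ exp (-(A*c^2)) * (1/(3*c^3)) := by positivity
      linarith
    rcases le_or_gt y (2*c) with h2 | h2
    · have hquad : exp (-(A*(y-c)^2)) ≤ exp 1 * exp (a*(0 - (y-c))) := quadlin hA0 hasq
      rw [show a*(0 - (y-c)) = a*(c - y) by ring] at hquad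
      have hfirst : (ε/sβ) * exp (-(A*(y-c)^2)) * (1/y^4)
            * (exp 1/c^4 * (1/a) + exp (-(A*c^2)) * (1/(3*c^3)))
          ≤ (ε/sβ) * (exp 1/c^4 * (1/a) + exp (-(A*c^2)) * (1/(3*c^3))) * exp 1
            * (1/y^4 * exp (a*(c - y))) := by
        rw [show (ε/sβ) * (exp 1/c^4 * (1/a) + exp (-(A*c^2)) * (1/(3*c^3))) * exp 1
            * (1/y^4 * exp (a*(c - y)))
          = (ε/sβ) * (exp 1 * exp (a*(c - y))) * (1/y^4)
            * (exp 1/c^4 * (1/a) + exp (-(A*c^2)) * (1/(3*c^3))) by ring]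
        apply mul_le_mul_of_nonneg_right _ hBint0
        apply mul_le_mul_of_nonneg_right _ (by positivity)
        exact mul_le_mul_of_nonneg_left hquad (div_nonneg hε0.le hsβ0.le)
      have hsecond : 0 ≤ exp (-(2*A*c^2)) * (1/3) * (1/y^6) := by positivity
      linarith [step_mid1 y hy1 h2]
    · have hfirst : 0 ≤ (ε/sβ) * (exp 1/c^4 * (1/a) + exp (-(A*c^2)) * (1/(3*c^3))) * exp 1
            * (1/y^4 * exp (a*(c - y))) := by
        apply mul_nonneg
        apply mul_nonneg (mul_nonneg (div_nonneg hε0.le hsβ0.le) hBint0) (exp_pos 1).le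
        positivity
      linarith [step_mid2 y h2]
  -- integrate the dominator over y
  have hint1 : IntegrableOn (fun y => 1/y^4 * exp (a*(c - y))) (Ioi c) := by
    apply Integrable.mono' ((intOn_expIoi c c ha0).const_mul (1/c^4))
    · apply ContinuousOn.aestronglyMeasurable _ measurableSet_Ioi
      apply ContinuousOn.mul
      · apply ContinuousOn.div continuousOn_const (by fun_prop)
        intro x hx
        have hx0 : 0 < x := hc0.trans hx
        positivity
      · exact (continuousOn_const.mul (continuousOn_const.sub continuousOn_id)).rexp
    · refine (ae_restrict_iff' measurableSet_Ioi).2 (Filter.Eventually.of_forall ?_)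
      intro y hy
      have hy0 : 0 < y := hc0.trans hy
      rw [Real.norm_eq_abs, abs_of_nonneg (by positivity)]
      apply mul_le_mul_of_nonneg_right _ (exp_pos _).le
      exact one_div_le_one_div_of_le (pow_pos hc0 4) (pow_le_pow_left₀ hc0.le (le_of_lt hy) 4)
     
  have hval1 : (∫ y in Ioi c, 1/y^4 * exp (a*(c - y))) ≤ (1/c^4) * (1/a) := by
    have h := integral_mono_of_nonneg (μ := volume.restrict (Ioi c))
      (f := fun y => 1/y^4 * exp (a*(c - y))) (g := fun y => (1/c^4) * exp (a*(c - y)))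
      ?_ ((intOn_expIoi c c ha0).const_mul (1/c^4)) ?_
    · rw [integral_const_mul, intval_expIoi ha0] at h
      exact h
    · refine (ae_restrict_iff' measurableSet_Ioi).2 (Filter.Eventually.of_forall ?_)
      intro y hy
      have hy0 : 0 < y := hc0.trans hy
      positivity
    · refine (ae_restrict_iff' measurableSet_Ioi).2 (Filter.Eventually.of_forall ?_)
      intro y hy
      have hy0 : 0 < y := hc0.trans hy
      apply mul_le_mul_of_nonneg_right _ (exp_pos _).le
      exact one_div_le_one_div_of_le (pow_pos hc0 4) (pow_le_pow_left₀ hc0.le (le_of_lt hy) 4)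
  set Bint : ℝ := exp 1/c^4 * (1/a) + exp (-(A*c^2)) * (1/(3*c^3)) with hBintdef
  have hBint0 : 0 ≤ Bint := by
    rw [hBintdef]
    have h1 : 0 ≤ exp 1/c^4 * (1/a) :=
      mul_nonneg (by positivity) (le_of_lt (one_div_pos.2 ha0))
    have h2 : 0 ≤ exp (-(A*c^2)) * (1/(3*c^3)) := by positivity
    linarith
  clear_value Bint
  have hTbound : (∫ y in Ioi c, ∫ ty in Ioi y, ∫ tw in c..y,
        1/(y*ty)^4 * exp (1/ε^2 * (-b^3/6 - f y + f tw - f ty)))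
      ≤ (ε/sβ) * Bint * exp 1 * ((1/c^4) * (1/a))
        + exp (-(2*A*c^2)) * (1/3) * (1/(5*c^5)) := by
    have hK10 : 0 ≤ (ε/sβ) * Bint * exp 1 :=
      mul_nonneg (mul_nonneg (div_nonneg hε0.le hsβ0.le) hBint0) (exp_pos 1).le
    have hmono : (∫ y in Ioi c, ∫ ty in Ioi y, ∫ tw in c..y,
          1/(y*ty)^4 * exp (1/ε^2 * (-b^3/6 - f y + f tw - f ty)))
        ≤ ∫ y in Ioi c, ((ε/sβ) * Bint * exp 1 * (1/y^4 * exp (a*(c - y)))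
            + exp (-(2*A*c^2)) * (1/3) * (1/y^6)) := by
      apply integral_mono_of_nonneg
      · refine (ae_restrict_iff' measurableSet_Ioi).2 (Filter.Eventually.of_forall ?_)
        intro y hy
        apply integral_nonneg
        intro ty
        apply intervalIntegral.integral_nonneg (le_of_lt hy)
        intro u _
        positivity
      · exact (hint1.const_mul _).add ((intOn_pow6 hc0).const_mul _)
      · refine (ae_restrict_iff' measurableSet_Ioi).2 (Filter.Eventually.of_forall ?_)
        intro y hy
        simpa using houter y hy
    refine le_trans hmono ?_
    rw [integral_add (hint1.const_mul _) ((intOn_pow6 hc0).const_mul _),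
      integral_const_mul, integral_const_mul, intval_pow6 hc0]
    have h1 : (ε/sβ) * Bint * exp 1 * (∫ y in Ioi c, 1/y^4 * exp (a*(c - y)))
        ≤ (ε/sβ) * Bint * exp 1 * ((1/c^4) * (1/a)) :=
      mul_le_mul_of_nonneg_left hval1 hK10
    linarith
  -- final numerics
  have hainv : 1/a = ε/s2β := by rw [hadef, one_div_div]
  have hBintle : Bint ≤ ε * KB := by
    rw [hBintdef, hKBdef, hainv]
    have h1 : exp 1/c^4 * (ε/s2β) = ε * (exp 1/(c^4*s2β)) := by ring
    have h2 : exp (-(A*c^2)) * (1/(3*c^3)) ≤ ε * (1/(3*c^3)) :=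
      mul_le_mul_of_nonneg_right hEh (by positivity)
    rw [mul_add]
    rw [h1]
    linarith
  have hfin : (∫ y in Ioi c, ∫ ty in Ioi y, ∫ tw in c..y,
        1/(y*ty)^4 * exp (1/ε^2 * (-b^3/6 - f y + f tw - f ty))) ≤ ε^3 * C := by
    have t1le : (ε/sβ) * Bint * exp 1 * ((1/c^4) * (1/a))
        ≤ (ε/sβ) * (ε*KB) * exp 1 * ((1/c^4) * (1/a)) := by
      apply mul_le_mul_of_nonneg_right _
        (mul_nonneg (by positivity) (le_of_lt (one_div_pos.2 ha0)))
      apply mul_le_mul_of_nonneg_right _ (exp_pos 1).le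
      exact mul_le_mul_of_nonneg_left hBintle (div_nonneg hε0.le hsβ0.le)
    have t1eq : (ε/sβ) * (ε*KB) * exp 1 * ((1/c^4) * (1/a))
        = ε^3 * (exp 1 * KB/(sβ*s2β*c^4)) := by
      rw [hainv]
      field_simp
    have t2le : exp (-(2*A*c^2)) * (1/3) * (1/(5*c^5)) ≤ ε^3 * (1/(15*c^5)) := by
      have h := mul_le_mul_of_nonneg_right hE3
        (show (0:ℝ) ≤ (1/3) * (1/(5*c^5)) by positivity)
      calc exp (-(2*A*c^2)) * (1/3) * (1/(5*c^5))
          = exp (-(2*A*c^2)) * ((1/3) * (1/(5*c^5))) := by ring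
        _ ≤ ε^3 * ((1/3) * (1/(5*c^5))) := h
        _ = ε^3 * (1/(15*c^5)) := by ring
    rw [hCdef, mul_add]
    linarith [hTbound, t1le, t1eq.le, t1eq.symm.le, t2le]
  have hε3 : (0:ℝ) < ε^3 := by positivity
  calc 1/ε^3 * (∫ y in Ioi c, ∫ ty in Ioi y, ∫ tw in c..y,
        1/(y*ty)^4 * exp (1/ε^2 * (-b^3/6 - f y + f tw - f ty)))
      ≤ 1/ε^3 * (ε^3 * C) := mul_le_mul_of_nonneg_left hfin (by positivity)
    _ = C := by field_simp
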